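/- Every Polish diversity (𝕌, δ_𝕌) with the extension property is a universal Polish diversity: for every separable diversity (X, δ) there exists a map φ : X → 𝕌 with δ_𝕌(φ(A)) = δ(A) for all finite A ⊆ X. -/

import Mathlib

open scoped Classical

/-- A diversity on `X`: a real-valued function on finite subsets satisfying
(D1) nonnegativity with `δ A = 0 ↔ |A| ≤ 1`, and (D2) the triangle inequality. -/
structure Diversity (X : Type*) where
  δ : Finset X → ℝ
  nonneg : ∀ A : Finset X, 0 ≤ δ A
  eq_zero_iff : ∀ A : Finset X, δ A = 0 ↔ A.card ≤ 1
  triangle : ∀ A B C : Finset X, B.Nonempty → δ (A ∪ C) ≤ δ (A ∪ B) + δ (B ∪ C)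

/-- An admissible function on a diversity (a one-point extension). -/
structure IsAdmissible {X : Type*} (D : Diversity X) (f : Finset X → ℝ) : Prop where
  empty : f ∅ = 0
  le : ∀ A : Finset X, D.δ A ≤ f A
  tri : ∀ A B C : Finset X, C.Nonempty → f (A ∪ B) ≤ f (A ∪ C) + D.δ (B ∪ C)
  subadd : ∀ A B : Finset X, f (A ∪ B) ≤ f A + f B

/-- Restriction of a diversity to a subset. -/
noncomputable def Diversity.restrict {X : Type*} (D : Diversity X) (S : Set X) : Diversity S where
  δ A := D.δ (A.image Subtype.val)
  nonneg A := D.nonneg _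
  eq_zero_iff A := by
    rw [D.eq_zero_iff, Finset.card_image_of_injective _ Subtype.val_injective]
  triangle A B C hB := by
    have h := D.triangle (A.image Subtype.val) (B.image Subtype.val) (C.image Subtype.val)
      (hB.image _)
    simpa [Finset.image_union] using h

/-- Separability of the induced metric `d a b = δ {a, b}`. -/
def Diversity.SeparableD {X : Type*} (D : Diversity X) : Prop :=
  ∃ s : Set X, s.Countable ∧ ∀ x : X, ∀ ε : ℝ, 0 < ε → ∃ y ∈ s, D.δ {x, y} < ε

/-- Completeness of the induced metric `d a b = δ {a, b}`. -/
def Diversity.CompleteD {X : Type*} (D : Diversity X) : Prop :=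
  ∀ u : ℕ → X, (∀ ε : ℝ, 0 < ε → ∃ N : ℕ, ∀ m ≥ N, ∀ n ≥ N, D.δ {u m, u n} < ε) →
    ∃ x : X, ∀ ε : ℝ, 0 < ε → ∃ N : ℕ, ∀ n ≥ N, D.δ {u n, x} < ε

/-- The diversity `δ̂` on (finite sets of) admissible functions. -/
noncomputable def hatδ {X : Type*} (F : Finset (Finset X → ℝ)) : ℝ :=
  if F.card ≤ 1 then 0
  else sSup { r : ℝ | ∃ j ∈ F, ∃ A : (Finset X → ℝ) → Finset X,
    r = j ((F.erase j).biUnion A) - ∑ i ∈ F.erase j, i (A i) }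

/-- The canonical maximal extension `f_S^X` of an admissible function on `S ⊆ X`. -/
noncomputable def extFun {X : Type*} (D : Diversity X) (S : Set X) (f : Finset S → ℝ)
    (A : Finset X) : ℝ :=
  sInf { r : ℝ | ∃ (B : Finset S) (As : S → Finset X),
    B.biUnion As = A ∧ r = f B + ∑ b ∈ B, D.δ (insert (b : X) (As b)) }

/-- An admissible function is finitely supported if it is the canonical extension
of an admissible function on some finite nonempty `S ⊆ X`. -/
def FinitelySupported {X : Type*} (D : Diversity X) (f : Finset X → ℝ) : Prop :=
  ∃ S : Set X, S.Finite ∧ S.Nonempty ∧ ∃ g : Finset S → ℝ,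
    IsAdmissible (D.restrict S) g ∧ f = extFun D S g

/-- The extension property for a diversity. -/
def Diversity.ExtensionProp {X : Type*} (D : Diversity X) : Prop :=
  ∀ F : Finset X, ∀ f : Finset ((F : Set X)) → ℝ,
    IsAdmissible (D.restrict (F : Set X)) f →
    ∃ x : X, ∀ A : Finset ((F : Set X)), D.δ (insert x (A.image Subtype.val)) = f A

/-- The approximate extension property for a diversity. -/
def Diversity.ApproxExtensionProp {X : Type*} (D : Diversity X) : Prop :=
  ∀ F : Finset X, ∀ f : Finset ((F : Set X)) → ℝ,
    IsAdmissible (D.restrict (F : Set X)) f →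
    ∀ ε : ℝ, 0 < ε →
      ∃ x : X, ∀ A : Finset ((F : Set X)), |D.δ (insert x (A.image Subtype.val)) - f A| ≤ ε

/-- Ultrahomogeneity: isomorphisms between finite subsets extend to automorphisms. -/
def Diversity.Ultrahomogeneous {X : Type*} (D : Diversity X) : Prop :=
  ∀ (A A' : Finset X) (φ : ((A : Set X)) → ((A' : Set X))), Function.Bijective φ →
    (∀ B : Finset ((A : Set X)),
      D.δ (B.image (fun b => (φ b : X))) = D.δ (B.image Subtype.val)) →
    ∃ Φ : X → X, Function.Bijective Φ ∧ (∀ C : Finset X, D.δ (C.image Φ) = D.δ C) ∧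
      ∀ a : ((A : Set X)), Φ a = (φ a : X)
section AuxLemmas

variable {Y : Type*} (D : Diversity Y)

lemma div_empty : D.δ ∅ = 0 := (D.eq_zero_iff ∅).2 (by simp)

lemma div_singleton (y : Y) : D.δ {y} = 0 := (D.eq_zero_iff _).2 (by simp)

lemma div_mono_insert (A : Finset Y) (y : Y) : D.δ A ≤ D.δ (insert y A) := by
  have h := D.triangle A {y} ∅ (Finset.singleton_nonempty y)
  rw [Finset.union_empty, Finset.union_empty, div_singleton] at h
  rw [Finset.insert_eq, Finset.union_comm]
  linarith

lemma div_le_union (A C : Finset Y) : D.δ A ≤ D.δ (A ∪ C) := by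
  induction C using Finset.induction with
  | empty => simp
  | insert _ _ hc ih =>
      rw [Finset.union_insert]
      exact ih.trans (div_mono_insert D _ _)

lemma div_mono {A B : Finset Y} (h : A ⊆ B) : D.δ A ≤ D.δ B := by
  have := div_le_union D A B
  rwa [Finset.union_eq_right.2 h] at this

lemma div_pair_comm (a b : Y) : D.δ {a, b} = D.δ {b, a} := by rw [Finset.pair_comm]

lemma div_metric_tri (a b c : Y) : D.δ {a, b} ≤ D.δ {a, c} + D.δ {c, b} := by
  have h := D.triangle {a} {c} {b} (Finset.singleton_nonempty c)
  simpa [← Finset.insert_eq] using h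

lemma div_swap (S : Finset Y) (x y : Y) :
    D.δ (insert x S) ≤ D.δ (insert y S) + D.δ {x, y} := by
  have h := D.triangle S {y} {x} (Finset.singleton_nonempty y)
  rw [Finset.union_comm S {y}, Finset.union_comm S {x}] at h
  simp only [← Finset.insert_eq] at h
  rw [div_pair_comm D x y]
  simpa using h

lemma div_replace {ι : Type*} (f g : ι → Y) (A : Finset ι) :
    ∀ T : Finset Y, D.δ (T ∪ A.image f) ≤ D.δ (T ∪ A.image g) + ∑ i ∈ A, D.δ {f i, g i} := by
  induction A using Finset.induction with
  | empty => simp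
  | @insert a A ha ih =>
      intro T
      rw [Finset.image_insert, Finset.image_insert, Finset.sum_insert ha]
      have h1 : D.δ (T ∪ insert (f a) (A.image f)) ≤
          D.δ (T ∪ insert (g a) (A.image f)) + D.δ {f a, g a} := by
        have := div_swap D (T ∪ A.image f) (f a) (g a)
        simpa [Finset.union_insert] using this
      have h2 : D.δ (T ∪ insert (g a) (A.image f)) ≤
          D.δ (T ∪ insert (g a) (A.image g)) + ∑ i ∈ A, D.δ {f i, g i} := by
        have := ih (insert (g a) T)
        simpa [Finset.insert_union, Finset.union_insert] using this
      linarith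

lemma div_replace_abs {ι : Type*} (f g : ι → Y) (A : Finset ι) :
    |D.δ (A.image f) - D.δ (A.image g)| ≤ ∑ i ∈ A, D.δ {f i, g i} := by
  rw [abs_sub_le_iff]
  constructor
  · have := div_replace D f g A ∅
    simp only [Finset.empty_union] at this
    linarith
  · have := div_replace D g f A ∅
    simp only [Finset.empty_union] at this
    calc D.δ (A.image g) - D.δ (A.image f) ≤ ∑ i ∈ A, D.δ {g i, f i} := by linarith
    _ = ∑ i ∈ A, D.δ {f i, g i} := by
        exact Finset.sum_congr rfl fun i _ => div_pair_comm D (g i) (f i)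

end AuxLemmas
section Machinery

variable {U : Type*} {X : Type*}

/-- chosen index of an element of the image of `g` on `range n`. -/
noncomputable def pick (g : ℕ → U) (n : ℕ)
    (b : (((Finset.range n).image g : Finset U) : Set U)) : ℕ :=
  Classical.choose (Finset.mem_image.1 (Finset.mem_coe.1 b.2))

lemma pick_spec (g : ℕ → U) (n : ℕ)
    (b : (((Finset.range n).image g : Finset U) : Set U)) :
    pick g n b ∈ Finset.range n ∧ g (pick g n b) = (b : U) :=
  Classical.choose_spec (Finset.mem_image.1 (Finset.mem_coe.1 b.2))

/-- the candidate admissible function induced by `u n`. -/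
noncomputable def extf (D : Diversity X) (u : ℕ → X) (g : ℕ → U) (n : ℕ)
    (B : Finset ((((Finset.range n).image g : Finset U)) : Set U)) : ℝ :=
  D.δ (insert (u n) (B.image (fun b => u (pick g n b))))

noncomputable def nextPt [Nonempty U] (DU : Diversity U) (D : Diversity X)
    (he : DU.ExtensionProp) (u : ℕ → X) (g : ℕ → U) (n : ℕ) : U :=
  if h : IsAdmissible (DU.restrict (((Finset.range n).image g : Finset U) : Set U))
      (extf D u g n) then
    Classical.choose (he ((Finset.range n).image g) (extf D u g n) h)
  else Classical.arbitrary U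

noncomputable def seqW [Nonempty U] (DU : Diversity U) (D : Diversity X)
    (he : DU.ExtensionProp) (u : ℕ → X) : ℕ → ℕ → U
  | 0 => fun _ => Classical.arbitrary U
  | (n+1) => Function.update (seqW DU D he u n) n
      (nextPt DU D he u (seqW DU D he u n) n)

noncomputable def seqV [Nonempty U] (DU : Diversity U) (D : Diversity X)
    (he : DU.ExtensionProp) (u : ℕ → X) (n : ℕ) : U :=
  seqW DU D he u (n+1) n

lemma seqW_eq [Nonempty U] (DU : Diversity U) (D : Diversity X)
    (he : DU.ExtensionProp) (u : ℕ → X) :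
    ∀ n m, m < n → seqW DU D he u n m = seqV DU D he u m := by
  intro n
  induction n with
  | zero => omega
  | succ n ih =>
      intro m hm
      rcases eq_or_ne m n with rfl | hne
      · rfl
      · rw [seqW, Function.update_of_ne hne]
        exact ih m (by omega)

lemma seqV_eq [Nonempty U] (DU : Diversity U) (D : Diversity X)
    (he : DU.ExtensionProp) (u : ℕ → X) (n : ℕ) :
    seqV DU D he u n = nextPt DU D he u (seqW DU D he u n) n := by
  show Function.update (seqW DU D he u n) n _ n = _
  rw [Function.update_self]

end Machinery
section Core

variable {U : Type*} {X : Type*} (DU : Diversity U) (D : Diversity X)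
  (u : ℕ → X) (g : ℕ → U) (n : ℕ)

lemma image_union' {α β : Type*} [DecidableEq β] {inst : DecidableEq α} (f : α → β)
    (s t : Finset α) :
    Finset.image f (@Union.union _ (@Finset.instUnion α inst) s t) =
      Finset.image f s ∪ Finset.image f t := by
  letI := inst
  have h1 : @Union.union _ (@Finset.instUnion α inst) s t = s ∪ t := by
    ext x
    rw [Finset.mem_union]
  rw [h1, Finset.image_union]

lemma pair_inv
    (hinv : ∀ S : Finset ℕ, (∀ i ∈ S, i < n) → DU.δ (S.image g) = D.δ (S.image u))
    (i j : ℕ) (hi : i < n) (hj : j < n) : DU.δ {g i, g j} = D.δ {u i, u j} := by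
  have h := hinv {i, j} (by
    intro k hk
    rcases Finset.mem_insert.1 hk with rfl | hk
    · exact hi
    · rw [Finset.mem_singleton.1 hk]; exact hj)
  simpa [Finset.image_insert, Finset.image_singleton] using h

lemma u_pick_eq
    (hinv : ∀ S : Finset ℕ, (∀ i ∈ S, i < n) → DU.δ (S.image g) = D.δ (S.image u))
    (b : (((Finset.range n).image g : Finset U) : Set U)) (i : ℕ)
    (hi : i < n) (hb : g i = (b : U)) : u (pick g n b) = u i := by
  obtain ⟨hj, hgj⟩ := pick_spec g n b
  have hjn : pick g n b < n := Finset.mem_range.1 hj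
  have hgg : g (pick g n b) = g i := by rw [hgj, hb]
  have h0 : DU.δ {g (pick g n b), g i} = 0 := by
    rw [hgg]
    exact (DU.eq_zero_iff _).2 (by simp)
  have h1 : D.δ {u (pick g n b), u i} = 0 := by
    rw [← pair_inv DU D u g n hinv _ _ hjn hi, h0]
  have h2 := (D.eq_zero_iff _).1 h1
  have := Finset.card_le_one.1 h2 (u (pick g n b)) (by simp) (u i) (by simp)
  exact this

lemma key_fact
    (hinv : ∀ S : Finset ℕ, (∀ i ∈ S, i < n) → DU.δ (S.image g) = D.δ (S.image u))
    (B : Finset ((((Finset.range n).image g : Finset U)) : Set U)) :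
    DU.δ (B.image Subtype.val) = D.δ (B.image (fun b => u (pick g n b))) := by
  set T := B.image (fun b => pick g n b) with hTdef
  have hT : ∀ i ∈ T, i < n := by
    intro i hi
    obtain ⟨b, _, rfl⟩ := Finset.mem_image.1 hi
    exact Finset.mem_range.1 (pick_spec g n b).1
  have h1 : T.image g = B.image Subtype.val := by
    rw [hTdef, Finset.image_image]
    exact Finset.image_congr (fun b _ => (pick_spec g n b).2)
  have h2 : T.image u = B.image (fun b => u (pick g n b)) := by
    rw [hTdef, Finset.image_image]
    rfl
  rw [← h1, ← h2]
  exact hinv T hT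

lemma adm_extf
    (hinv : ∀ S : Finset ℕ, (∀ i ∈ S, i < n) → DU.δ (S.image g) = D.δ (S.image u)) :
    IsAdmissible (DU.restrict (((Finset.range n).image g : Finset U) : Set U))
      (extf D u g n) := by
  have key := key_fact DU D u g n hinv
  set ψ : (((Finset.range n).image g : Finset U) : Set U) → X :=
    fun b => u (pick g n b) with hψ
  have unf1 : ∀ E : Finset ((((Finset.range n).image g : Finset U)) : Set U),
      extf D u g n E = D.δ (insert (u n) (E.image ψ)) := fun _ => rfl
  have unf2 : ∀ E : Finset ((((Finset.range n).image g : Finset U)) : Set U),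
      (DU.restrict (((Finset.range n).image g : Finset U) : Set U)).δ E =
        DU.δ (E.image Subtype.val) := fun _ => rfl
  constructor
  · rw [unf1, Finset.image_empty]
    simpa using div_singleton D (u n)
  · intro B
    rw [unf1, unf2, key B]
    exact div_mono D (Finset.subset_insert _ _)
  · intro A B C hC
    rw [unf1, unf1, unf2, key]
    rw [image_union', image_union', image_union']
    have htri := D.triangle (insert (u n) (A.image ψ)) (C.image ψ) (B.image ψ)
      (hC.image ψ)
    rw [Finset.insert_union, Finset.insert_union,
      Finset.union_comm (C.image ψ) (B.image ψ)] at htri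
    linarith
  · intro A B
    rw [unf1, unf1, unf1, image_union']
    have htri := D.triangle (insert (u n) (A.image ψ)) {u n} (B.image ψ)
      (Finset.singleton_nonempty _)
    rw [Finset.insert_union] at htri
    have e2 : insert (u n) (A.image ψ) ∪ {u n} = insert (u n) (A.image ψ) :=
      Finset.union_eq_left.2 (by simp)
    have e3 : {u n} ∪ B.image ψ = insert (u n) (B.image ψ) :=
      (Finset.insert_eq _ _).symm
    rw [e2, e3] at htri
    exact htri

lemma main_inv [Nonempty U] (he : DU.ExtensionProp) (u : ℕ → X) :
    ∀ n (S : Finset ℕ), (∀ i ∈ S, i < n) →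
      DU.δ (S.image (seqV DU D he u)) = D.δ (S.image u) := by
  intro n
  induction n with
  | zero =>
      intro S hS
      have : S = ∅ := Finset.eq_empty_of_forall_notMem fun i hi => by
        have := hS i hi; omega
      subst this
      simp [div_empty]
  | succ n ih =>
      intro S hS
      by_cases hn : n ∈ S
      · set v := seqV DU D he u with hvdef
        set g := seqW DU D he u n with hgdef
        have hg : ∀ i, i < n → g i = v i := fun i hi => seqW_eq DU D he u n i hi
        have hinv : ∀ T : Finset ℕ, (∀ i ∈ T, i < n) →
            DU.δ (T.image g) = D.δ (T.image u) := by
          intro T hT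
          rw [Finset.image_congr (fun i hi => hg i (hT i hi))]
          exact ih T hT
        have hadm := adm_extf DU D u g n hinv
        have hv : v n = Classical.choose (he ((Finset.range n).image g) (extf D u g n) hadm) := by
          rw [hvdef, seqV_eq, ← hgdef, nextPt, dif_pos hadm]
        have hspec := Classical.choose_spec
          (he ((Finset.range n).image g) (extf D u g n) hadm)
        rw [← hv] at hspec
        set S' := S.erase n with hS'def
        have hS' : ∀ i ∈ S', i < n := by
          intro i hi
          obtain ⟨hne, hmem⟩ := Finset.mem_erase.1 hi
          have := hS i hmem; omega
        have hmem : ∀ i : {x // x ∈ S'}, g i.1 ∈ (((Finset.range n).image g : Finset U) : Set U) :=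
          fun i => Finset.mem_coe.2
            (Finset.mem_image_of_mem g (Finset.mem_range.2 (hS' i.1 i.2)))
        set A : Finset ((((Finset.range n).image g : Finset U)) : Set U) :=
          S'.attach.image (fun i => ⟨g i.1, hmem i⟩) with hAdef
        have hav : S'.attach.image Subtype.val = S' := Finset.attach_image_val
        have hA1 : A.image Subtype.val = S'.image g := by
          rw [hAdef, Finset.image_image]
          conv_rhs => rw [← hav, Finset.image_image]
          rfl
        have hA2 : A.image (fun b => u (pick g n b)) = S'.image u := by
          rw [hAdef, Finset.image_image]
          conv_rhs => rw [← hav, Finset.image_image]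
          exact Finset.image_congr (fun i _ =>
            u_pick_eq DU D u g n hinv ⟨g i.1, hmem i⟩ i.1 (hS' i.1 i.2) rfl)
        have hSplit : S = insert n S' := (Finset.insert_erase hn).symm
        rw [hSplit, Finset.image_insert, Finset.image_insert]
        have himg : S'.image v = S'.image g :=
          Finset.image_congr (fun i hi => (hg i (hS' i hi)).symm)
        rw [himg, ← hA1, hspec A]
        show extf D u g n A = _
        rw [extf, hA2]
      · exact ih S (fun i hi => by
          have h1 := hS i hi
          have h2 : i ≠ n := fun h => hn (h ▸ hi)
          omega)

end Core
/-- Every Polish diversity with the extension property is universal: every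
separable diversity embeds into it. -/
theorem stmt15 {U : Type*} (DU : Diversity U)
    (hs : DU.SeparableD) (hc : DU.CompleteD) (he : DU.ExtensionProp)
    {X : Type*} (D : Diversity X) (hXs : D.SeparableD) :
    ∃ φ : X → U, ∀ A : Finset X, DU.δ (A.image φ) = D.δ A := by
  by_cases hX : Nonempty X
  case neg =>
    rw [not_nonempty_iff] at hX
    refine ⟨fun x => (hX.false x).elim, fun A => ?_⟩
    have hA : A = ∅ := Finset.eq_empty_of_forall_notMem fun x _ => hX.false x
    rw [hA]
    simp [div_empty]
  case pos =>
  haveI := hX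
  have hUne : Nonempty U := by
    have hadm0 : IsAdmissible (DU.restrict ((∅ : Finset U) : Set U))
        (fun _ => (0 : ℝ)) := by
      refine ⟨rfl, ?_, ?_, ?_⟩
      · intro A
        have hA : A = ∅ := Finset.eq_empty_of_forall_notMem fun x _ => by
          simpa using x.2
        have hr : (DU.restrict ((∅ : Finset U) : Set U)).δ A =
            DU.δ (A.image Subtype.val) := rfl
        rw [hr, hA, Finset.image_empty, div_empty]
      · intro A B C hC
        exact le_add_of_nonneg_right ((DU.restrict ((∅ : Finset U) : Set U)).nonneg _)
      · intro A B
        norm_num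
    obtain ⟨x, -⟩ := he ∅ (fun _ => 0) hadm0
    exact ⟨x⟩
  haveI := hUne
  obtain ⟨s, hsc, hsd⟩ := hXs
  have hsne : s.Nonempty := by
    obtain ⟨y, hy, -⟩ := hsd (Classical.arbitrary X) 1 one_pos
    exact ⟨y, hy⟩
  obtain ⟨u, hu⟩ := Set.Countable.exists_eq_range hsc hsne
  have hdense : ∀ x : X, ∀ ε : ℝ, 0 < ε → ∃ k : ℕ, D.δ {x, u k} < ε := by
    intro x ε hε
    obtain ⟨y, hy, hlt⟩ := hsd x ε hε
    rw [hu] at hy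
    obtain ⟨k, rfl⟩ := hy
    exact ⟨k, hlt⟩
  set v := seqV DU D he u with hv
  have glob : ∀ S : Finset ℕ, DU.δ (S.image v) = D.δ (S.image u) := by
    intro S
    exact main_inv DU D he u (S.sup id + 1) S (fun i hi => by
      have := Finset.le_sup (f := id) hi
      simp only [id] at this
      omega)
  have hpair : ∀ i j : ℕ, DU.δ {v i, v j} = D.δ {u i, u j} := by
    intro i j
    have h := glob {i, j}
    simpa [Finset.image_insert, Finset.image_singleton] using h
  have hmex : ∀ (x : X) (k : ℕ), ∃ j : ℕ, D.δ {x, u j} < 1 / (k + 1) := by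
    intro x k
    exact hdense x _ (by positivity)
  choose m hm using hmex
  have hφex : ∀ x : X, ∃ z : U, ∀ ε : ℝ, 0 < ε →
      ∃ N, ∀ k ≥ N, DU.δ {v (m x k), z} < ε := by
    intro x
    apply hc (fun k => v (m x k))
    intro ε hε
    obtain ⟨N, hN⟩ := exists_nat_one_div_lt (half_pos hε)
    refine ⟨N, fun k hk l hl => ?_⟩
    have h1 : DU.δ {v (m x k), v (m x l)} = D.δ {u (m x k), u (m x l)} := hpair _ _
    have h2 : D.δ {u (m x k), u (m x l)} ≤ D.δ {u (m x k), x} + D.δ {x, u (m x l)} :=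
      div_metric_tri D _ _ _
    have h3 : D.δ {u (m x k), x} = D.δ {x, u (m x k)} := div_pair_comm D _ _
    have h4 : D.δ {x, u (m x k)} < 1 / (k + 1) := hm x k
    have h5 : D.δ {x, u (m x l)} < 1 / (l + 1) := hm x l
    have hk' : (N : ℝ) ≤ k := Nat.cast_le.2 hk
    have hl' : (N : ℝ) ≤ l := Nat.cast_le.2 hl
    have h6 : (1 : ℝ) / (k + 1) ≤ 1 / (N + 1) :=
      one_div_le_one_div_of_le (by positivity) (by linarith)
    have h7 : (1 : ℝ) / (l + 1) ≤ 1 / (N + 1) :=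
      one_div_le_one_div_of_le (by positivity) (by linarith)
    linarith
  choose φ hφ using hφex
  refine ⟨φ, fun A => ?_⟩
  have key : ∀ ε : ℝ, 0 < ε → |DU.δ (A.image φ) - D.δ A| ≤ ε := by
    intro ε hε
    set p := A.card with hpdef
    set ε' := ε / (2 * (p + 1)) with hε'def
    have hε' : 0 < ε' := by positivity
    choose N hN using fun a : X => hφ a ε' hε'
    obtain ⟨K₀, hK₀⟩ := exists_nat_one_div_lt hε'
    set k := max (A.sup N) K₀ with hkdef
    have hbound1 : ∀ a ∈ A, DU.δ {φ a, v (m a k)} ≤ ε' := by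
      intro a ha
      rw [div_pair_comm DU]
      exact (hN a k ((Finset.le_sup ha).trans (le_max_left _ _))).le
    have hbound2 : ∀ a ∈ A, D.δ {a, u (m a k)} ≤ ε' := by
      intro a ha
      have h1 := hm a k
      have hkK : (K₀ : ℝ) ≤ k := Nat.cast_le.2 (le_max_right _ _)
      have h2 : (1 : ℝ) / (k + 1) ≤ 1 / (K₀ + 1) :=
        one_div_le_one_div_of_le (by positivity) (by linarith)
      linarith
    have e1 : |DU.δ (A.image φ) - DU.δ (A.image (fun a => v (m a k)))| ≤ p * ε' := by
      refine (div_replace_abs DU φ (fun a => v (m a k)) A).trans ?_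
      calc ∑ a ∈ A, DU.δ {φ a, v (m a k)} ≤ ∑ _a ∈ A, ε' :=
            Finset.sum_le_sum hbound1
        _ = p * ε' := by rw [Finset.sum_const, nsmul_eq_mul]
    have e2 : DU.δ (A.image (fun a => v (m a k))) =
        D.δ (A.image (fun a => u (m a k))) := by
      have h1 : A.image (fun a => v (m a k)) = (A.image (fun a => m a k)).image v := by
        rw [Finset.image_image]
        rfl
      have h2 : A.image (fun a => u (m a k)) = (A.image (fun a => m a k)).image u := by
        rw [Finset.image_image]
        rfl
      rw [h1, h2]
      exact glob _
    have e3 : |D.δ (A.image (fun a => u (m a k))) - D.δ A| ≤ p * ε' := by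
      have him : A.image (fun a => a) = A := Finset.image_id'
      have h := div_replace_abs D (fun a => u (m a k)) (fun a => a) A
      rw [him] at h
      refine h.trans ?_
      calc ∑ a ∈ A, D.δ {u (m a k), a} ≤ ∑ _a ∈ A, ε' :=
            Finset.sum_le_sum (fun a ha => by
              rw [div_pair_comm D]
              exact hbound2 a ha)
        _ = p * ε' := by rw [Finset.sum_const, nsmul_eq_mul]
    rw [e2] at e1
    have htri := abs_sub_le (DU.δ (A.image φ))
      (D.δ (A.image (fun a => u (m a k)))) (D.δ A)
    have harith : 2 * ((p : ℝ) * ε') ≤ ε := by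
      have hp1 : (0 : ℝ) < (p : ℝ) + 1 := by positivity
      have heq : 2 * ((p : ℝ) * ε') = ε * ((p : ℝ) / ((p : ℝ) + 1)) := by
        rw [hε'def]
        field_simp
      have hle : (p : ℝ) / ((p : ℝ) + 1) ≤ 1 := by
        rw [div_le_one hp1]
        linarith
      calc 2 * ((p : ℝ) * ε') = ε * ((p : ℝ) / ((p : ℝ) + 1)) := heq
        _ ≤ ε * 1 := mul_le_mul_of_nonneg_left hle hε.le
        _ = ε := mul_one ε
    linarith
  have h0 : |DU.δ (A.image φ) - D.δ A| = 0 := by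
    by_contra h
    have hpos : 0 < |DU.δ (A.image φ) - D.δ A| :=
      lt_of_le_of_ne (abs_nonneg _) (Ne.symm h)
    have := key (|DU.δ (A.image φ) - D.δ A| / 2) (by positivity)
    linarith
  have := abs_eq_zero.1 h0
  linarith
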